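/- arXiv:1409.5614 — 2 statements merged into one kernel-verified Lean document; each statement's English description precedes it below -/
import Mathlib

section
/- Suppose S and T are numerical semigroups, w ≥ 1 an integer, and f a polynomial with nonnegative integer coefficients such that H_S(x^w)·f(x) = H_T(x) as formal power series. Then P_S(x^w) divides P_T(x) in ℤ[x], and the quotient Q(x) = P_T(x)/P_S(x^w) is a monic polynomial with Q(0) = 1 whose nonzero coefficients, read in order of increasing degree, alternate between +1 and −1, beginning with +1. -/
open Polynomial
open scoped Classical

/-- A numerical semigroup: a subset of `ℕ` containing `0`, closed under addition,
with finite complement in `ℕ`. -/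
structure NumericalSemigroup where
  carrier : Set ℕ
  zero_mem : 0 ∈ carrier
  add_mem : ∀ ⦃a b : ℕ⦄, a ∈ carrier → b ∈ carrier → a + b ∈ carrier
  finite_compl : Set.Finite carrierᶜ

namespace NumericalSemigroup

/-- The Hilbert series `H_S(x) = Σ_{s ∈ S} x^s`. -/
noncomputable def H (S : NumericalSemigroup) : PowerSeries ℤ :=
  PowerSeries.mk fun n => if n ∈ S.carrier then 1 else 0

/-- The Hilbert series evaluated at `x^w`: `H_S(x^w) = Σ_{s ∈ S} x^{w·s}`. -/
noncomputable def Hexp (S : NumericalSemigroup) (w : ℕ) : PowerSeries ℤ :=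
  PowerSeries.mk fun n => if ∃ s ∈ S.carrier, n = w * s then 1 else 0

/-- The semigroup polynomial `P_S(x) = (1-x)·H_S(x) = 1 + (x-1)·Σ_{s ∉ S} x^s`. -/
noncomputable def P (S : NumericalSemigroup) : Polynomial ℤ :=
  1 + (X - 1) * ∑ s ∈ S.finite_compl.toFinset, X ^ s

/-- The Frobenius number: the largest integer not in `S` (equal to `-1` when `S = ℕ`). -/
noncomputable def Frob (S : NumericalSemigroup) : ℤ :=
  (insert (-1 : ℤ) (S.finite_compl.toFinset.image fun n : ℕ => (n : ℤ))).max'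
    (Finset.insert_nonempty _ _)

/-- The genus: the number of gaps of `S`. -/
noncomputable def genus (S : NumericalSemigroup) : ℕ := S.finite_compl.toFinset.card

/-- `S` viewed as a set of integers. -/
def intSet (S : NumericalSemigroup) : Set ℤ := (fun n : ℕ => (n : ℤ)) '' S.carrier

/-- `S` is cyclotomic if every complex root of `P_S` lies in the closed unit disc. -/
def IsCyclotomicNS (S : NumericalSemigroup) : Prop :=
  ∀ z : ℂ, Polynomial.aeval z S.P = 0 → ‖z‖ ≤ 1

/-- `S` is symmetric if for every integer `z`, `z ∈ S ↔ F(S) - z ∉ S`. -/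
def IsSymmetric (S : NumericalSemigroup) : Prop :=
  ∀ z : ℤ, z ∈ S.intSet ↔ S.Frob - z ∉ S.intSet

/-- The Apéry set of `S` with respect to `m`: elements `s ∈ S` with `s - m ∉ S`
(in particular all `s ∈ S` with `s < m`). -/
def Ap (S : NumericalSemigroup) (m : ℕ) : Set ℕ :=
  {s ∈ S.carrier | ∀ t ∈ S.carrier, t + m ≠ s}

end NumericalSemigroup

/-- The nonzero coefficients of `Q`, read in order of increasing degree, alternate
between `+1` and `-1`: each coefficient is `0`, `1` or `-1`, and any two consecutive
nonzero coefficients have opposite signs. -/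
def AlternatingCoeffs (Q : Polynomial ℤ) : Prop :=
  (∀ i, Q.coeff i = 0 ∨ Q.coeff i = 1 ∨ Q.coeff i = -1) ∧
  ∀ i j, i < j → Q.coeff i ≠ 0 → Q.coeff j ≠ 0 →
    (∀ k, i < k → k < j → Q.coeff k = 0) → Q.coeff j = -Q.coeff i

namespace QPR

noncomputable def G (w : ℕ) : PowerSeries ℤ :=
  PowerSeries.mk fun m => if w ∣ m then 1 else 0

lemma G_rec (w : ℕ) (hw : 1 ≤ w) : G w = 1 + PowerSeries.X ^ w * G w := by
  ext n
  rw [map_add, PowerSeries.coeff_X_pow_mul']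
  simp only [G, PowerSeries.coeff_mk, PowerSeries.coeff_one]
  by_cases hn : w ≤ n
  · have h1 : n ≠ 0 := by omega
    have h2 : w ∣ n ↔ w ∣ n - w := by
      constructor
      · intro hd; exact Nat.dvd_sub hd (dvd_refl w)
      · intro hd
        have : n = (n - w) + w := by omega
        rw [this]; exact dvd_add hd (dvd_refl w)
    simp [hn, h1, h2, -Nat.dvd_sub_self_right]
  · rcases Nat.eq_zero_or_pos n with h0 | h0
    · simp only [h0]
      simp [hn]
      omega
    · have hnd : ¬ w ∣ n := fun hd => hn (Nat.le_of_dvd h0 hd)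
      simp [hn, hnd]
      omega

lemma G_mul (w : ℕ) (hw : 1 ≤ w) : (1 - PowerSeries.X ^ w) * G w = 1 := by
  rw [sub_mul, one_mul, sub_eq_iff_eq_add]
  exact G_rec w hw

lemma mk_one_rec : PowerSeries.mk (fun _ => (1:ℤ)) =
    1 + PowerSeries.X * PowerSeries.mk (fun _ => (1:ℤ)) := by
  ext n
  cases n with
  | zero => simp
  | succ m => simp [PowerSeries.coeff_succ_X_mul]

lemma one_sub_X_mul : (1 - PowerSeries.X) * PowerSeries.mk (fun _ => (1:ℤ)) = 1 := by
  rw [sub_mul, one_mul, sub_eq_iff_eq_add]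
  exact mk_one_rec

lemma exists_bound (S : NumericalSemigroup) : ∃ B : ℕ, ∀ n, B ≤ n → n ∈ S.carrier := by
  refine ⟨S.finite_compl.toFinset.sup id + 1, fun n hn => ?_⟩
  by_contra hns
  have h1 : n ∈ S.finite_compl.toFinset := by
    rw [Set.Finite.mem_toFinset]; exact hns
  have h2 := Finset.le_sup (f := id) h1
  simp only [id] at h2
  omega

end QPR

open NumericalSemigroup in
/-- If `H_S(x^w)·f(x) = H_T(x)` with `w ≥ 1` and `f` a polynomial with nonnegative
integer coefficients, then `P_S(x^w)` divides `P_T(x)` in `ℤ[x]` and the quotient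
`Q = P_T / P_S(x^w)` is monic with `Q(0) = 1` and its nonzero coefficients alternate
between `+1` and `-1`, beginning with `+1`. -/
theorem quotient_of_polynomially_related (S T : NumericalSemigroup) (w : ℕ) (hw : 1 ≤ w)
    (f : Polynomial ℤ) (hf : ∀ i, 0 ≤ f.coeff i)
    (h : S.Hexp w * (f : PowerSeries ℤ) = T.H) :
    Polynomial.expand ℤ w S.P ∣ T.P ∧
    ∃ Q : Polynomial ℤ, T.P = Polynomial.expand ℤ w S.P * Q ∧
      Q.Monic ∧ Q.coeff 0 = 1 ∧ AlternatingCoeffs Q := by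
  classical
  obtain ⟨B, hB⟩ := QPR.exists_bound S
  obtain ⟨Bt, hBt⟩ := QPR.exists_bound T
  set Gw : PowerSeries ℤ := QPR.G w with hGw
  set Cc : PowerSeries ℤ := Gw * ↑f with hCc
  set c : ℕ → ℤ := fun n => PowerSeries.coeff n Cc with hcdef
  -- recurrence
  have hCrec : Cc = (f : PowerSeries ℤ) + PowerSeries.X ^ w * Cc := by
    rw [hCc, hGw]
    nth_rewrite 1 [QPR.G_rec w hw]
    ring
  have hc_rec : ∀ n, c (n + w) = f.coeff (n + w) + c n := by
    intro n
    show PowerSeries.coeff (n + w) Cc = _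
    nth_rewrite 1 [hCrec]
    rw [map_add, Polynomial.coeff_coe, PowerSeries.coeff_X_pow_mul]
  have hc_nonneg : ∀ n, 0 ≤ c n := by
    intro n
    show 0 ≤ PowerSeries.coeff n (Gw * (f : PowerSeries ℤ))
    rw [PowerSeries.coeff_mul]
    apply Finset.sum_nonneg
    intro p hp
    apply mul_nonneg
    · rw [hGw]; simp only [QPR.G, PowerSeries.coeff_mk]
      split <;> norm_num
    · rw [Polynomial.coeff_coe]; exact hf p.2
  have hc_mono : ∀ n m, c n ≤ c (n + w * m) := by
    intro n m
    induction m with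
    | zero => simp
    | succ k ih =>
      have h1 := hc_rec (n + w * k)
      have h2 := hf (n + w * k + w)
      have h3 : n + w * (k + 1) = n + w * k + w := by ring
      rw [h3]
      omega
  have hcT : ∀ n, w * B + f.natDegree ≤ n → c n = (if n ∈ T.carrier then 1 else 0) := by
    intro n hn
    have heq : c n = PowerSeries.coeff n (S.Hexp w * (f : PowerSeries ℤ)) := by
      show PowerSeries.coeff n (Gw * (f : PowerSeries ℤ)) = _
      rw [PowerSeries.coeff_mul, PowerSeries.coeff_mul]
      apply Finset.sum_congr rfl
      intro p hp
      rcases eq_or_ne (f.coeff p.2) 0 with h0 | h0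
      · rw [Polynomial.coeff_coe, h0, mul_zero, mul_zero]
      · have hp2 : p.2 ≤ f.natDegree := Polynomial.le_natDegree_of_ne_zero h0
        have hpsum : p.1 + p.2 = n := Finset.HasAntidiagonal.mem_antidiagonal.mp hp
        have hwB : w * B ≤ p.1 := by
          have h1 : w * B ≤ n - f.natDegree := by omega
          have h2 : n - f.natDegree ≤ p.1 := by omega
          omega
        have hiff : (w ∣ p.1) ↔ (∃ s ∈ S.carrier, p.1 = w * s) := by
          constructor
          · rintro ⟨k, hk⟩
            refine ⟨k, hB k ?_, hk⟩
            rw [hk] at hwB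
            exact Nat.le_of_mul_le_mul_left hwB (by omega)
          · rintro ⟨s, _, hs⟩; exact ⟨s, hs⟩
        rw [hGw]
        simp only [QPR.G, NumericalSemigroup.Hexp, PowerSeries.coeff_mk, hiff]
    rw [heq, h]
    simp [NumericalSemigroup.H]
  set M := max (w * B + f.natDegree) Bt with hM
  have hc1 : ∀ n, M ≤ n → c n = 1 := by
    intro n hn
    rw [hcT n (le_trans (le_max_left _ _) hn),
      if_pos (hBt n (le_trans (le_max_right _ _) hn))]
  have hc01 : ∀ n, c n = 0 ∨ c n = 1 := by
    intro n
    have h1 := hc_mono n M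
    have h2 : c (n + w * M) = 1 := by
      apply hc1
      calc M ≤ w * M := Nat.le_mul_of_pos_left M (by omega)
        _ ≤ n + w * M := Nat.le_add_left _ _
    have h3 := hc_nonneg n
    omega
  have hf0 : f.coeff 0 = 1 := by
    have h0 := congrArg (PowerSeries.constantCoeff) h
    rw [map_mul] at h0
    have e1 : PowerSeries.constantCoeff (S.Hexp w) = 1 := by
      rw [NumericalSemigroup.Hexp, PowerSeries.constantCoeff_mk,
        if_pos ⟨0, S.zero_mem, by simp⟩]
    have e2 : PowerSeries.constantCoeff T.H = 1 := by
      rw [NumericalSemigroup.H, PowerSeries.constantCoeff_mk, if_pos T.zero_mem]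
    rw [e1, e2, one_mul, Polynomial.constantCoeff_coe] at h0
    exact h0
  have hc0 : c 0 = 1 := by
    show PowerSeries.coeff 0 Cc = 1
    rw [PowerSeries.coeff_zero_eq_constantCoeff, hCc, map_mul, hGw]
    rw [Polynomial.constantCoeff_coe, hf0]
    simp [QPR.G, PowerSeries.constantCoeff_mk]
  -- the quotient polynomial
  set q : ℕ → ℤ := fun n => if n = 0 then c 0 else c n - c (n - 1) with hq
  have hq0 : q 0 = c 0 := by simp [hq]
  have hqsucc : ∀ m, q (m + 1) = c (m + 1) - c m := by intro m; simp [hq]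
  set Q : Polynomial ℤ := ∑ n ∈ Finset.range (M + 1), Polynomial.C (q n) * Polynomial.X ^ n
    with hQdef
  have hQcoeff : ∀ n, Q.coeff n = q n := by
    intro n
    rw [hQdef, Polynomial.finset_sum_coeff]
    simp only [Polynomial.coeff_C_mul, Polynomial.coeff_X_pow, mul_ite, mul_one, mul_zero]
    rw [Finset.sum_ite_eq]
    by_cases hn : n ∈ Finset.range (M + 1)
    · rw [if_pos hn]
    · rw [if_neg hn]
      have hn' : M + 1 ≤ n := by
        simpa [Finset.mem_range, not_lt] using hn
      have e1 : c n = 1 := hc1 n (by omega)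
      have e2 : c (n - 1) = 1 := hc1 _ (by omega)
      rw [hq]
      simp only [e1, e2, sub_self]
      rw [if_neg (show ¬ n = 0 by omega)]
  have hQC : (↑Q : PowerSeries ℤ) = (1 - PowerSeries.X) * Cc := by
    ext n
    rw [Polynomial.coeff_coe, hQcoeff, sub_mul, one_mul, map_sub]
    cases n with
    | zero =>
      rw [PowerSeries.coeff_zero_X_mul, sub_zero, hq0]
    | succ m =>
      rw [PowerSeries.coeff_succ_X_mul, hqsucc]
  -- power series identities for P
  have hTsum : T.H + ((∑ s ∈ T.finite_compl.toFinset, (Polynomial.X : Polynomial ℤ) ^ s :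
      Polynomial ℤ) : PowerSeries ℤ) = PowerSeries.mk (fun _ => 1) := by
    ext n
    rw [map_add, Polynomial.coeff_coe, Polynomial.finset_sum_coeff]
    simp only [Polynomial.coeff_X_pow, NumericalSemigroup.H, PowerSeries.coeff_mk]
    rw [Finset.sum_ite_eq]
    simp only [Set.Finite.mem_toFinset]
    by_cases hn : n ∈ T.carrier
    · simp [hn]
    · simp [hn]
  have hTP : (↑T.P : PowerSeries ℤ) = (1 - PowerSeries.X) * T.H := by
    have hH : T.H = PowerSeries.mk (fun _ => (1:ℤ)) -
        ((∑ s ∈ T.finite_compl.toFinset, (Polynomial.X : Polynomial ℤ) ^ s :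
          Polynomial ℤ) : PowerSeries ℤ) := by
      rw [← hTsum]; ring
    rw [NumericalSemigroup.P, Polynomial.coe_add, Polynomial.coe_one, Polynomial.coe_mul,
      Polynomial.coe_sub, Polynomial.coe_X, Polynomial.coe_one, hH]
    have e : (1 - PowerSeries.X) * (PowerSeries.mk (fun _ => (1:ℤ)) -
        ((∑ s ∈ T.finite_compl.toFinset, (Polynomial.X : Polynomial ℤ) ^ s :
          Polynomial ℤ) : PowerSeries ℤ)) =
        1 - (1 - PowerSeries.X) *
          ((∑ s ∈ T.finite_compl.toFinset, (Polynomial.X : Polynomial ℤ) ^ s :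
            Polynomial ℤ) : PowerSeries ℤ) := by
      rw [mul_sub, QPR.one_sub_X_mul]
    rw [e]; ring
  have hexpand : Polynomial.expand ℤ w S.P =
      1 + ((Polynomial.X : Polynomial ℤ) ^ w - 1) *
        ∑ s ∈ S.finite_compl.toFinset, (Polynomial.X : Polynomial ℤ) ^ (w * s) := by
    rw [NumericalSemigroup.P, map_add, map_one, map_mul, map_sub, map_one,
      Polynomial.expand_X, map_sum]
    congr 1
    congr 1
    apply Finset.sum_congr rfl
    intro s _
    rw [map_pow, Polynomial.expand_X, ← pow_mul]
  have hSsum : S.Hexp w + ((∑ s ∈ S.finite_compl.toFinset,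
      (Polynomial.X : Polynomial ℤ) ^ (w * s) : Polynomial ℤ) : PowerSeries ℤ) = Gw := by
    ext n
    rw [map_add, Polynomial.coeff_coe, Polynomial.finset_sum_coeff, hGw]
    simp only [Polynomial.coeff_X_pow, NumericalSemigroup.Hexp, QPR.G, PowerSeries.coeff_mk]
    by_cases hd : w ∣ n
    · obtain ⟨k, rfl⟩ := hd
      have hcond : ∀ s : ℕ, (w * k = w * s) ↔ (k = s) := by
        intro s
        constructor
        · intro he; exact Nat.eq_of_mul_eq_mul_left (by omega) he
        · rintro rfl; rfl
      have h1 : (∃ s ∈ S.carrier, w * k = w * s) ↔ k ∈ S.carrier := by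
        constructor
        · rintro ⟨s, hs, he⟩
          rwa [(hcond s).mp he]
        · intro hk; exact ⟨k, hk, rfl⟩
      simp only [hcond, h1]
      rw [Finset.sum_ite_eq]
      simp only [Set.Finite.mem_toFinset]
      rw [if_pos (dvd_mul_right w k)]
      by_cases hk : k ∈ S.carrier
      · simp [hk]
      · simp [hk]
    · have h1 : ¬ ∃ s ∈ S.carrier, n = w * s := by
        rintro ⟨s, _, rfl⟩; exact hd (dvd_mul_right w s)
      have h2 : ∀ s ∈ S.finite_compl.toFinset, (if n = w * s then (1:ℤ) else 0) = 0 := by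
        intro s _
        apply if_neg
        intro he
        exact hd (by rw [he]; exact dvd_mul_right w s)
      rw [Finset.sum_eq_zero h2]
      simp [h1, hd]
  have hSP : (↑(Polynomial.expand ℤ w S.P) : PowerSeries ℤ) =
      (1 - PowerSeries.X ^ w) * S.Hexp w := by
    have hH : S.Hexp w = Gw - ((∑ s ∈ S.finite_compl.toFinset,
        (Polynomial.X : Polynomial ℤ) ^ (w * s) : Polynomial ℤ) : PowerSeries ℤ) := by
      rw [← hSsum]; ring
    rw [hexpand, Polynomial.coe_add, Polynomial.coe_one, Polynomial.coe_mul,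
      Polynomial.coe_sub, Polynomial.coe_pow, Polynomial.coe_X, Polynomial.coe_one, hH]
    have e : (1 - PowerSeries.X ^ w) * (Gw - ((∑ s ∈ S.finite_compl.toFinset,
        (Polynomial.X : Polynomial ℤ) ^ (w * s) : Polynomial ℤ) : PowerSeries ℤ)) =
        1 - (1 - PowerSeries.X ^ w) * ((∑ s ∈ S.finite_compl.toFinset,
          (Polynomial.X : Polynomial ℤ) ^ (w * s) : Polynomial ℤ) : PowerSeries ℤ) := by
      rw [mul_sub, hGw, QPR.G_mul w hw]
    rw [e]; ring
  -- the main factorization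
  have hfinal : T.P = Polynomial.expand ℤ w S.P * Q := by
    apply Polynomial.coe_inj.mp
    rw [Polynomial.coe_mul, hSP, hQC, hTP, hCc]
    calc (1 - PowerSeries.X) * T.H
        = (1 - PowerSeries.X) * (S.Hexp w * ↑f) := by rw [h]
      _ = ((1 - PowerSeries.X ^ w) * Gw) * ((1 - PowerSeries.X) * (S.Hexp w * ↑f)) := by
          rw [hGw, QPR.G_mul w hw, one_mul]
      _ = (1 - PowerSeries.X ^ w) * S.Hexp w * ((1 - PowerSeries.X) * (Gw * ↑f)) := by
          ring
  -- properties of Q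
  have hQ0 : Q.coeff 0 = 1 := by rw [hQcoeff, hq0, hc0]
  have hQne : Q ≠ 0 := by
    intro h0
    rw [h0] at hQ0
    simp at hQ0
  have hconst : ∀ n, Q.natDegree ≤ n → c n = c Q.natDegree := by
    intro n hn
    induction n with
    | zero => rw [Nat.le_zero.mp hn]
    | succ m ih =>
      rcases Nat.lt_or_ge m Q.natDegree with hm | hm
      · have e : Q.natDegree = m + 1 := by omega
        rw [e]
      · have h1 : Q.coeff (m + 1) = 0 :=
          Polynomial.coeff_eq_zero_of_natDegree_lt (by omega)
        rw [hQcoeff, hqsucc] at h1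
        have h2 := ih hm
        omega
  have hcd : c Q.natDegree = 1 := by
    have h1 := hconst (Q.natDegree + M) (by omega)
    have h2 := hc1 (Q.natDegree + M) (by omega)
    omega
  have hmonic : Q.Monic := by
    have hlc : Q.coeff Q.natDegree ≠ 0 := by
      rw [← Polynomial.leadingCoeff]
      exact Polynomial.leadingCoeff_ne_zero.mpr hQne
    show Q.leadingCoeff = 1
    rw [Polynomial.leadingCoeff]
    rcases Nat.eq_zero_or_pos Q.natDegree with hd | hd
    · rw [hd]; exact hQ0
    · obtain ⟨m, hm⟩ : ∃ m, Q.natDegree = m + 1 := ⟨Q.natDegree - 1, by omega⟩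
      rw [hm] at hlc hcd ⊢
      rw [hQcoeff, hqsucc] at hlc ⊢
      rcases hc01 m with h0 | h0 <;> omega
  have halt : AlternatingCoeffs Q := by
    constructor
    · intro i
      rw [hQcoeff]
      cases i with
      | zero =>
        rw [hq0, hc0]; right; left; rfl
      | succ m =>
        rw [hqsucc]
        rcases hc01 m with h1 | h1 <;> rcases hc01 (m + 1) with h2 | h2 <;> omega
    · intro i j hij hi hj hzero
      simp only [hQcoeff] at hi hj ⊢
      have hcc : ∀ k, i ≤ k → k < j → c k = c i := by
        intro k hk1 hk2
        induction k with
        | zero =>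
          have e : i = 0 := by omega
          rw [e]
        | succ m ih =>
          rcases Nat.lt_or_ge m i with hm | hm
          · have e : i = m + 1 := by omega
            rw [e]
          · have h1 : Q.coeff (m + 1) = 0 := hzero (m + 1) (by omega) hk2
            rw [hQcoeff, hqsucc] at h1
            have h2 := ih hm (by omega)
            omega
      obtain ⟨jm, rfl⟩ : ∃ jm, j = jm + 1 := ⟨j - 1, by omega⟩
      have hcj : c jm = c i := hcc jm (by omega) (by omega)
      rw [hqsucc] at hj ⊢
      cases i with
      | zero =>
        rw [hq0, hc0] at hi ⊢
        rw [hc0] at hcj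
        rcases hc01 (jm + 1) with h1 | h1 <;> omega
      | succ im =>
        rw [hqsucc] at hi ⊢
        rcases hc01 im with h1 | h1 <;> rcases hc01 (im + 1) with h2 | h2 <;>
          rcases hc01 (jm + 1) with h3 | h3 <;> omega
  exact ⟨⟨Q, hfinal⟩, Q, hfinal, hmonic, hQ0, halt⟩
end

section
/- Let S = a_1 S_1 +_{a_1 a_2} a_2 S_2 be a gluing of numerical semigroups S_1 and S_2. Then every element s ∈ S can be written in a unique way as s = a_1·w_1 + a_2·s_2 with w_1 ∈ Ap(S_1; a_2) and s_2 ∈ S_2; consequently H_S(x) = H_{S_2}(x^{a_2}) · Σ_{w ∈ Ap(S_1;a_2)} x^{a_1 w}, so both S_1 and S_2 are polynomially related to S via a relating polynomial with nonnegative integer coefficients. -/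
open Polynomial
open scoped Classical

open NumericalSemigroup

lemma aux_nsmul_mem (S : NumericalSemigroup) {a : ℕ} (ha : a ∈ S.carrier) (k : ℕ) :
    k * a ∈ S.carrier := by
  induction k with
  | zero => simpa using S.zero_mem
  | succ n ih => rw [Nat.succ_mul]; exact S.add_mem ih ha

lemma aux_apery_decomp (S : NumericalSemigroup) (m : ℕ) (hm : 0 < m) :
    ∀ s ∈ S.carrier, ∃ w ∈ S.Ap m, ∃ k, s = w + k * m := by
  intro s
  induction s using Nat.strong_induction_on with
  | _ s ih =>
    intro hs
    by_cases h : ∀ t ∈ S.carrier, t + m ≠ s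
    · exact ⟨s, ⟨hs, h⟩, 0, by simp⟩
    · push_neg at h
      obtain ⟨t, ht, hts⟩ := h
      obtain ⟨w, hw, k, hk⟩ := ih t (by omega) ht
      refine ⟨w, hw, k + 1, ?_⟩
      have : (k + 1) * m = k * m + m := by ring
      omega

lemma aux_ap_finite (S : NumericalSemigroup) (m : ℕ) (hm0 : 0 < m) (hm : m ∈ S.carrier) :
    (S.Ap m).Finite := by
  apply Set.Finite.of_finite_image (f := fun s => s % m)
  · exact (Set.finite_Iio m).subset (by
      rintro x ⟨s, _, rfl⟩
      exact Nat.mod_lt _ hm0)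
  · intro s hs s' hs' hmod
    simp only at hmod
    have key : ∀ u u' : ℕ, u ∈ S.Ap m → u' ∈ S.Ap m → u ≤ u' → u % m = u' % m → u = u' := by
      intro u u' hu hu' hle hmod
      obtain ⟨k, hk⟩ := (Nat.modEq_iff_dvd' hle).mp hmod
      match k, hk with
      | 0, hk => omega
      | k + 1, hk =>
        exfalso
        have hmem : u + m * k ∈ S.carrier := S.add_mem hu.1 (by
          have := aux_nsmul_mem S hm k; rwa [Nat.mul_comm] at this)
        refine hu'.2 _ hmem ?_
        have : m * (k + 1) = m * k + m := by ring
        omega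
    rcases Nat.le_total s s' with hle | hle
    · exact key s s' hs hs' hle hmod
    · exact (key s' s hs' hs hle hmod.symm).symm

lemma aux_unique (S₁ S₂ : NumericalSemigroup) (a₁ a₂ : ℕ) (ha₁ : 0 < a₁) (ha₂ : 0 < a₂)
    (hcop : Nat.Coprime a₁ a₂) (h₂ : a₂ ∈ S₁.carrier)
    {w w' t t' : ℕ} (hw : w ∈ S₁.Ap a₂) (hw' : w' ∈ S₁.Ap a₂)
    (heq : a₁ * w + a₂ * t = a₁ * w' + a₂ * t') : w = w' ∧ t = t' := by
  suffices key : ∀ {u u' v v' : ℕ}, u ∈ S₁.Ap a₂ → u' ∈ S₁.Ap a₂ → u' ≤ u →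
      a₁ * u + a₂ * v = a₁ * u' + a₂ * v' → u = u' by
    have hww : w = w' := by
      rcases Nat.le_total w' w with hle | hle
      · exact key hw hw' hle heq
      · exact (key hw' hw hle heq.symm).symm
    subst hww
    refine ⟨rfl, Nat.eq_of_mul_eq_mul_left ha₂ (by omega)⟩
  intro u u' v v' hu hu' hle heq
  have hmono : a₁ * u' ≤ a₁ * u := Nat.mul_le_mul_left a₁ hle
  have e1 : a₁ * (u - u') + a₁ * u' = a₁ * u := by
    rw [← Nat.mul_add]; congr 1; omega
  have hv : a₂ * v ≤ a₂ * v' := by omega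
  have hvle : v ≤ v' := Nat.le_of_mul_le_mul_left hv ha₂
  have e2 : a₂ * (v' - v) + a₂ * v = a₂ * v' := by
    rw [← Nat.mul_add]; congr 1; omega
  have h3 : a₁ * (u - u') = a₂ * (v' - v) := by omega
  have hdvd2 : a₂ ∣ u - u' := (Nat.Coprime.dvd_of_dvd_mul_left hcop.symm) ⟨v' - v, h3⟩
  obtain ⟨k, hk⟩ := hdvd2
  match k, hk with
  | 0, hk => omega
  | k + 1, hk =>
    exfalso
    have hmem : u' + a₂ * k ∈ S₁.carrier := S₁.add_mem hu'.1 (by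
      have := aux_nsmul_mem S₁ h₂ k; rwa [Nat.mul_comm] at this)
    refine hu.2 _ hmem ?_
    have : a₂ * (k + 1) = a₂ * k + a₂ := by ring
    omega

lemma aux_exu (S₁ S₂ S : NumericalSemigroup) (a₁ a₂ : ℕ) (ha₁ : 0 < a₁) (ha₂ : 0 < a₂)
    (hcop : Nat.Coprime a₁ a₂) (h₁ : a₁ ∈ S₂.carrier) (h₂ : a₂ ∈ S₁.carrier)
    (hS : S.carrier = {n | ∃ s₁ ∈ S₁.carrier, ∃ s₂ ∈ S₂.carrier, n = a₁ * s₁ + a₂ * s₂}) :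
    ∀ s ∈ S.carrier, ∃! ws : ℕ × ℕ, ws.1 ∈ S₁.Ap a₂ ∧ ws.2 ∈ S₂.carrier ∧
        s = a₁ * ws.1 + a₂ * ws.2 := by
  intro s hs
  rw [hS] at hs
  obtain ⟨s₁, hs₁, s₂, hs₂, rfl⟩ := hs
  obtain ⟨w, hw, k, hk⟩ := aux_apery_decomp S₁ a₂ ha₂ s₁ hs₁
  refine ⟨(w, k * a₁ + s₂), ⟨hw, S₂.add_mem (aux_nsmul_mem S₂ h₁ k) hs₂, by subst hk; ring⟩, ?_⟩
  rintro ⟨w', t'⟩ ⟨hw', ht', heq⟩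
  have h0 : a₁ * s₁ + a₂ * s₂ = a₁ * w + a₂ * (k * a₁ + s₂) := by subst hk; ring
  have hu := aux_unique S₁ S₂ a₁ a₂ ha₁ ha₂ hcop h₂ hw' hw (heq.symm.trans h0)
  simp only [Prod.mk.injEq]
  exact ⟨hu.1, hu.2⟩

lemma aux_series (S₁ S₂ S : NumericalSemigroup) (a₁ a₂ : ℕ) (ha₁ : 0 < a₁) (ha₂ : 0 < a₂)
    (hcop : Nat.Coprime a₁ a₂) (h₁ : a₁ ∈ S₂.carrier) (h₂ : a₂ ∈ S₁.carrier)
    (hS : S.carrier = {n | ∃ s₁ ∈ S₁.carrier, ∃ s₂ ∈ S₂.carrier, n = a₁ * s₁ + a₂ * s₂})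
    (hfin : (S₁.Ap a₂).Finite) :
    S.H = S₂.Hexp a₂ * ∑ w ∈ hfin.toFinset, (PowerSeries.X : PowerSeries ℤ) ^ (a₁ * w) := by
  have exu := aux_exu S₁ S₂ S a₁ a₂ ha₁ ha₂ hcop h₁ h₂ hS
  ext n
  rw [PowerSeries.coeff_mul]
  simp only [H, Hexp, PowerSeries.coeff_mk, map_sum, PowerSeries.coeff_X_pow, Finset.mul_sum]
  rw [← Finset.sum_product']
  have hterm : ∀ q ∈ Finset.HasAntidiagonal.antidiagonal n ×ˢ hfin.toFinset,
      ((if ∃ s ∈ S₂.carrier, q.1.1 = a₂ * s then (1:ℤ) else 0) *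
        (if q.1.2 = a₁ * q.2 then 1 else 0)) =
      (if (∃ s ∈ S₂.carrier, q.1.1 = a₂ * s) ∧ q.1.2 = a₁ * q.2 then 1 else 0) := by
    intro q _; split_ifs with h1 h2 h3 <;> simp_all
  rw [Finset.sum_congr rfl hterm, Finset.sum_boole]
  by_cases hn : n ∈ S.carrier
  · obtain ⟨⟨w₀, t₀⟩, ⟨hw₀, ht₀, hrep⟩, huniq⟩ := exu n hn
    dsimp only at hw₀ ht₀ hrep
    have hfil : ((Finset.HasAntidiagonal.antidiagonal n ×ˢ hfin.toFinset).filter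
        fun q => (∃ s ∈ S₂.carrier, q.1.1 = a₂ * s) ∧ q.1.2 = a₁ * q.2)
        = {((a₂ * t₀, a₁ * w₀), w₀)} := by
      ext ⟨⟨i, j⟩, w⟩
      simp only [Finset.mem_filter, Finset.mem_product, Finset.HasAntidiagonal.mem_antidiagonal,
        Set.Finite.mem_toFinset, Finset.mem_singleton, Prod.mk.injEq]
      constructor
      · rintro ⟨⟨hij, hwT⟩, ⟨s, hsS, rfl⟩, rfl⟩
        have heq : (w, s) = (w₀, t₀) := huniq (w, s) ⟨hwT, hsS, by dsimp only; omega⟩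
        have h1 : w = w₀ := congrArg Prod.fst heq
        have h2 : s = t₀ := congrArg Prod.snd heq
        subst h1; subst h2
        exact ⟨⟨rfl, rfl⟩, rfl⟩
      · rintro ⟨⟨rfl, rfl⟩, rfl⟩
        exact ⟨⟨by omega, hw₀⟩, ⟨t₀, ht₀, rfl⟩, rfl⟩
    rw [hfil]
    simp [hn]
  · have hfil : ((Finset.HasAntidiagonal.antidiagonal n ×ˢ hfin.toFinset).filter
        fun q => (∃ s ∈ S₂.carrier, q.1.1 = a₂ * s) ∧ q.1.2 = a₁ * q.2) = ∅ := by
      ext ⟨⟨i, j⟩, w⟩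
      simp only [Finset.mem_filter, Finset.mem_product, Finset.HasAntidiagonal.mem_antidiagonal,
        Set.Finite.mem_toFinset, Finset.notMem_empty, iff_false, not_and]
      rintro ⟨hij, hwT⟩ ⟨s, hsS, rfl⟩ rfl
      apply hn
      rw [hS]
      exact ⟨w, hwT.1, s, hsS, by omega⟩
    rw [hfil]
    simp [hn]

lemma aux_poly_coe (T : Finset ℕ) (c : ℕ) :
    ((∑ w ∈ T, (Polynomial.X : Polynomial ℤ) ^ (c * w) : Polynomial ℤ) : PowerSeries ℤ)
      = ∑ w ∈ T, (PowerSeries.X : PowerSeries ℤ) ^ (c * w) := by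
  rw [← Polynomial.coeToPowerSeries.ringHom_apply, map_sum]
  simp [Polynomial.coeToPowerSeries.ringHom_apply]

lemma aux_poly_nonneg (T : Finset ℕ) (c : ℕ) (i : ℕ) :
    0 ≤ (∑ w ∈ T, (Polynomial.X : Polynomial ℤ) ^ (c * w)).coeff i := by
  rw [Polynomial.finset_sum_coeff]
  apply Finset.sum_nonneg
  intro w _
  rw [Polynomial.coeff_X_pow]
  split <;> simp


open NumericalSemigroup in
/-- For a gluing `S = a₁S₁ +_{a₁a₂} a₂S₂`: every `s ∈ S` can be written in a unique way
as `s = a₁·w₁ + a₂·s₂` with `w₁ ∈ Ap(S₁; a₂)` and `s₂ ∈ S₂`; consequently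
`H_S(x) = H_{S₂}(x^{a₂}) · Σ_{w ∈ Ap(S₁;a₂)} x^{a₁·w}`, so both `S₁` and `S₂` are
polynomially related to `S` via a relating polynomial with nonnegative integer
coefficients. -/
theorem gluing_unique_decomposition_and_polynomially_related
    (S₁ S₂ S : NumericalSemigroup) (a₁ a₂ : ℕ) (ha₁ : 0 < a₁) (ha₂ : 0 < a₂)
    (hcop : Nat.Coprime a₁ a₂) (h₁ : a₁ ∈ S₂.carrier) (h₂ : a₂ ∈ S₁.carrier)
    (hS : S.carrier = {n | ∃ s₁ ∈ S₁.carrier, ∃ s₂ ∈ S₂.carrier, n = a₁ * s₁ + a₂ * s₂})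
    (hfin : (S₁.Ap a₂).Finite) :
    (∀ s ∈ S.carrier, ∃! ws : ℕ × ℕ, ws.1 ∈ S₁.Ap a₂ ∧ ws.2 ∈ S₂.carrier ∧
        s = a₁ * ws.1 + a₂ * ws.2) ∧
    S.H = S₂.Hexp a₂ * ∑ w ∈ hfin.toFinset, (PowerSeries.X : PowerSeries ℤ) ^ (a₁ * w) ∧
    (∃ f : Polynomial ℤ, (∀ i, 0 ≤ f.coeff i) ∧ S₁.Hexp a₁ * (f : PowerSeries ℤ) = S.H) ∧
    (∃ f : Polynomial ℤ, (∀ i, 0 ≤ f.coeff i) ∧ S₂.Hexp a₂ * (f : PowerSeries ℤ) = S.H) := by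
  have hser₂ := aux_series S₁ S₂ S a₁ a₂ ha₁ ha₂ hcop h₁ h₂ hS hfin
  have hS' : S.carrier = {n | ∃ s₂ ∈ S₂.carrier, ∃ s₁ ∈ S₁.carrier, n = a₂ * s₂ + a₁ * s₁} := by
    rw [hS]; ext n
    simp only [Set.mem_setOf_eq]
    constructor <;> rintro ⟨x, hx, y, hy, h⟩ <;> exact ⟨y, hy, x, hx, by omega⟩
  have hfin' : (S₂.Ap a₁).Finite := aux_ap_finite S₂ a₁ ha₁ h₁
  have hser₁ := aux_series S₂ S₁ S a₂ a₁ ha₂ ha₁ hcop.symm h₂ h₁ hS' hfin'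
  refine ⟨aux_exu S₁ S₂ S a₁ a₂ ha₁ ha₂ hcop h₁ h₂ hS, hser₂, ?_, ?_⟩
  · exact ⟨∑ w ∈ hfin'.toFinset, (Polynomial.X : Polynomial ℤ) ^ (a₂ * w),
      aux_poly_nonneg _ _, by rw [aux_poly_coe, ← hser₁]⟩
  · exact ⟨∑ w ∈ hfin.toFinset, (Polynomial.X : Polynomial ℤ) ^ (a₁ * w),
      aux_poly_nonneg _ _, by rw [aux_poly_coe, ← hser₂]⟩
end
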